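/- If f : S → T is a pseudo-isometry with constants K, C, then the natural map F : X → X̂_f to the surgered space is a pseudo-isometry; explicitly, d_{X̂_f}(F(x),F(y)) ≤ d_X(x,y) and (1/K²)d_X(x,y) − 7C/K ≤ d_{X̂_f}(F(x),F(y)) for all x, y ∈ X, and F is coarsely surjective with constant C. -/

import Mathlib

/-- `f` is a pseudo-isometry with constants `K`, `C`. -/
def IsPseudoIsometry {S T : Type*} [MetricSpace S] [MetricSpace T] (f : S → T) (K C : ℝ) : Prop :=
  (∀ x₀ x₁ : S, (1 / K) * dist x₀ x₁ - C ≤ dist (f x₀) (f x₁) ∧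
      dist (f x₀) (f x₁) ≤ K * dist x₀ x₁) ∧
  ∀ y : T, ∃ x : S, dist (f x) y ≤ C

/-- An admissible sequence from `x` to `y`: data `(x₀,y₁),(u₁,v₁),(x₁,y₂),…,(u_k,v_k),(x_k,y_{k+1})`
with `x₀ = x`, `y_{k+1} = y`, `xᵢ, yᵢ ∈ S` for `1 ≤ i ≤ k`, and `uᵢ = f(yᵢ)`, `vᵢ = f(xᵢ)`
(so the `T`-points are determined and not stored). We record `xᵢ` as `xs i` and `yᵢ` as `ys i`. -/
structure AdmSeq {X T : Type*} [MetricSpace X] [MetricSpace T] (S : Set X) (f : S → T)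
    (x y : X) where
  k : ℕ
  xs : ℕ → X
  ys : ℕ → X
  hx0 : xs 0 = x
  hyend : ys (k + 1) = y
  hxS : ∀ i, 1 ≤ i → i ≤ k → xs i ∈ S
  hyS : ∀ i, 1 ≤ i → i ≤ k → ys i ∈ S

/-- The length of an admissible sequence:
`ℓ(γ) = d_X(x₀,y₁) + Σ_{i=1}^k (d_T(uᵢ,vᵢ) + d_X(xᵢ,y_{i+1}))`. -/
noncomputable def AdmSeq.length {X T : Type*} [MetricSpace X] [MetricSpace T] {S : Set X}
    {f : S → T} {x y : X} (γ : AdmSeq S f x y) : ℝ :=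
  dist (γ.xs 0) (γ.ys 1) +
    ∑ i : Fin γ.k,
      (dist (f ⟨γ.ys (i.val + 1), γ.hyS _ (Nat.succ_le_succ (Nat.zero_le _)) i.isLt⟩)
          (f ⟨γ.xs (i.val + 1), γ.hxS _ (Nat.succ_le_succ (Nat.zero_le _)) i.isLt⟩) +
        dist (γ.xs (i.val + 1)) (γ.ys (i.val + 2)))

/-- The pseudo-metric `p(x,y)`: the infimum of lengths of admissible sequences from `x` to `y`. -/
noncomputable def surgP {X T : Type*} [MetricSpace X] [MetricSpace T] (S : Set X) (f : S → T)
    (x y : X) : ℝ :=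
  sInf {l : ℝ | ∃ γ : AdmSeq S f x y, l = γ.length}

/-- The pseudo-distance from `x ∈ X` to `t ∈ T` in the glued space: the infimum of lengths of
admissible sequences from `x` whose final pair `(x_k, y_{k+1})` is omitted, so the final
`T`-point `v_k = t` is free. -/
noncomputable def surgPXT {X T : Type*} [MetricSpace X] [MetricSpace T] (S : Set X)
    (f : S → T) (x : X) (t : T) : ℝ :=
  sInf {l : ℝ | ∃ (s : S) (γ : AdmSeq S f x s), l = γ.length + dist (f s) t}

/-- The pseudo-distance between `t, t′ ∈ T` in the glued space: either directly `d_T(t,t′)`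
(the admissible sequence consisting of the single pair `(t, t′)` with both end pairs omitted)
or via an admissible sequence through `X` with free endpoints `u₁ = t`, `v_k = t′`. -/
noncomputable def surgPTT {X T : Type*} [MetricSpace X] [MetricSpace T] (S : Set X)
    (f : S → T) (t t' : T) : ℝ :=
  min (dist t t')
    (sInf {l : ℝ | ∃ (s s' : S) (γ : AdmSeq S f (s : X) (s' : X)),
      l = dist t (f s) + γ.length + dist (f s') t'})

/-- The pseudo-metric on `X ⊔ T` given by the infimum of lengths of admissible sequences;
the surgered space `X̂_f` is its metric quotient, so distances in `X̂_f` between images of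
points of `X ⊔ T` are computed by `surgD`. -/
noncomputable def surgD {X T : Type*} [MetricSpace X] [MetricSpace T] (S : Set X)
    (f : S → T) : X ⊕ T → X ⊕ T → ℝ
  | .inl x, .inl y => surgP S f x y
  | .inl x, .inr t => surgPXT S f x t
  | .inr t, .inl y => surgPXT S f y t
  | .inr t, .inr t' => surgPTT S f t t'

/-- Chain triangle inequality: alternating chain of points. -/
lemma chain_dist_aux {T : Type*} [MetricSpace T] (u v : ℕ → T) (A B : ℕ → ℝ) :
    ∀ n, (∀ i, i ≤ n → dist (u i) (v i) ≤ A i) →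
      (∀ i, i < n → dist (v i) (u (i + 1)) ≤ B i) →
      dist (u 0) (v n) ≤ (∑ i ∈ Finset.range (n + 1), A i) + ∑ i ∈ Finset.range n, B i := by
  intro n
  induction n with
  | zero =>
    intro hA _
    simpa using hA 0 le_rfl
  | succ n ih =>
    intro hA hB
    have h1 : dist (u 0) (v (n + 1)) ≤
        dist (u 0) (v n) + dist (v n) (u (n + 1)) + dist (u (n + 1)) (v (n + 1)) :=
      dist_triangle4 _ _ _ _
    have h2 := ih (fun i hi => hA i (hi.trans (Nat.le_succ n))) (fun i hi => hB i (hi.trans (Nat.lt_succ_self n)))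
    have h3 := hB n (Nat.lt_succ_self n)
    have h4 := hA (n + 1) le_rfl
    rw [Finset.sum_range_succ (f := A), Finset.sum_range_succ (f := B)]
    linarith

lemma AdmSeq.length_nonneg {X T : Type*} [MetricSpace X] [MetricSpace T] {S : Set X}
    {f : S → T} {x y : X} (γ : AdmSeq S f x y) : 0 ≤ γ.length := by
  unfold AdmSeq.length
  have := Finset.sum_nonneg (s := (Finset.univ : Finset (Fin γ.k)))
    (f := fun i : Fin γ.k =>
      (dist (f ⟨γ.ys (i.val + 1), γ.hyS _ (Nat.succ_le_succ (Nat.zero_le _)) i.isLt⟩)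
          (f ⟨γ.xs (i.val + 1), γ.hxS _ (Nat.succ_le_succ (Nat.zero_le _)) i.isLt⟩) +
        dist (γ.xs (i.val + 1)) (γ.ys (i.val + 2))))
    (fun i _ => by positivity)
  have h0 : (0:ℝ) ≤ dist (γ.xs 0) (γ.ys 1) := dist_nonneg
  linarith

/-- The trivial admissible sequence. -/
def AdmSeq.trivial {X T : Type*} [MetricSpace X] [MetricSpace T] (S : Set X) (f : S → T)
    (x y : X) : AdmSeq S f x y where
  k := 0
  xs := fun _ => x
  ys := fun _ => y
  hx0 := rfl
  hyend := rfl
  hxS := fun i h1 h2 => absurd (h1.trans h2) (by omega)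
  hyS := fun i h1 h2 => absurd (h1.trans h2) (by omega)

lemma AdmSeq.trivial_length {X T : Type*} [MetricSpace X] [MetricSpace T] (S : Set X)
    (f : S → T) (x y : X) : (AdmSeq.trivial S f x y).length = dist x y := by
  simp [AdmSeq.length, AdmSeq.trivial]
  exact Finset.sum_eq_zero (fun i _ => Fin.elim0 i)

/-- Lower bound for the length of any admissible sequence. -/
lemma AdmSeq.length_lb {X T : Type*} [MetricSpace X] [MetricSpace T] {S : Set X} {f : S → T}
    {x y : X} {K C : ℝ} (hK : 1 ≤ K) (hC : 0 ≤ C)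
    (hf : ∀ a b : S, (1 / K) * dist a b - C ≤ dist (f a) (f b) ∧
      dist (f a) (f b) ≤ K * dist a b)
    (γ : AdmSeq S f x y) :
    (1 / K ^ 2) * dist x y - C / K ≤ γ.length := by
  have hK0 : (0:ℝ) < K := lt_of_lt_of_le one_pos hK
  have hKne : K ≠ 0 := ne_of_gt hK0
  rcases Nat.eq_zero_or_pos γ.k with hk | hk
  · -- k = 0 : the length is d(x, y₁) with y₁ = y
    have hE : IsEmpty (Fin γ.k) := by rw [hk]; infer_instance
    have hlen : γ.length = dist x y := by
      unfold AdmSeq.length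
      rw [Finset.univ_eq_empty, Finset.sum_empty, γ.hx0]
      have := γ.hyend
      rw [hk] at this
      rw [this, add_zero]
    rw [hlen]
    have hd : (0:ℝ) ≤ dist x y := dist_nonneg
    have hK2 : (1:ℝ) ≤ K ^ 2 := by nlinarith
    have h1 : (1 / K ^ 2) * dist x y ≤ dist x y := by
      rw [div_mul_eq_mul_div, one_mul]
      exact div_le_self hd hK2
    have h2 : (0:ℝ) ≤ C / K := by positivity
    linarith
  · -- k ≥ 1
    obtain ⟨n, hn⟩ : ∃ n, γ.k = n + 1 := ⟨γ.k - 1, by omega⟩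
    have hk1 : 1 ≤ γ.k := hk
    set Y : ℕ → S := fun m => if h : 1 ≤ m ∧ m ≤ γ.k then ⟨γ.ys m, γ.hyS m h.1 h.2⟩
      else ⟨γ.ys 1, γ.hyS 1 le_rfl hk1⟩ with hYdef
    set Xp : ℕ → S := fun m => if h : 1 ≤ m ∧ m ≤ γ.k then ⟨γ.xs m, γ.hxS m h.1 h.2⟩
      else ⟨γ.ys 1, γ.hyS 1 le_rfl hk1⟩ with hXdef
    have hY : ∀ (m : ℕ), 1 ≤ m → m ≤ γ.k → (Y m : X) = γ.ys m := by
      intro m h1 h2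
      simp only [hYdef]
      rw [dif_pos ⟨h1, h2⟩]
    have hXp : ∀ (m : ℕ), 1 ≤ m → m ≤ γ.k → (Xp m : X) = γ.xs m := by
      intro m h1 h2
      simp only [hXdef]
      rw [dif_pos ⟨h1, h2⟩]
    -- rewrite the length
    have hlen : γ.length = dist x (γ.ys 1) +
        ∑ i ∈ Finset.range γ.k,
          (dist (f (Y (i + 1))) (f (Xp (i + 1))) + dist (γ.xs (i + 1)) (γ.ys (i + 2))) := by
      unfold AdmSeq.length
      rw [γ.hx0]
      congr 1
      rw [← Fin.sum_univ_eq_sum_range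
        (fun i => dist (f (Y (i + 1))) (f (Xp (i + 1))) + dist (γ.xs (i + 1)) (γ.ys (i + 2)))]
      apply Finset.sum_congr rfl
      intro i _
      have e1 : Y (i.val + 1) = ⟨γ.ys (i.val + 1),
          γ.hyS _ (Nat.succ_le_succ (Nat.zero_le _)) i.isLt⟩ := by
        apply Subtype.ext
        exact hY _ (Nat.succ_le_succ (Nat.zero_le _)) i.isLt
      have e2 : Xp (i.val + 1) = ⟨γ.xs (i.val + 1),
          γ.hxS _ (Nat.succ_le_succ (Nat.zero_le _)) i.isLt⟩ := by
        apply Subtype.ext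
        exact hXp _ (Nat.succ_le_succ (Nat.zero_le _)) i.isLt
      rw [e1, e2]
    -- the chain inequality in T
    have hchain : dist (f (Y 1)) (f (Xp (n + 1))) ≤
        (∑ i ∈ Finset.range (n + 1), dist (f (Y (i + 1))) (f (Xp (i + 1)))) +
        ∑ i ∈ Finset.range n, K * dist (γ.xs (i + 1)) (γ.ys (i + 2)) := by
      have := chain_dist_aux (fun i => f (Y (i + 1))) (fun i => f (Xp (i + 1)))
        (fun i => dist (f (Y (i + 1))) (f (Xp (i + 1))))
        (fun i => K * dist (γ.xs (i + 1)) (γ.ys (i + 2))) n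
        (fun i _ => le_rfl) ?_
      · exact this
      · intro i hi
        have hle : dist (f (Xp (i + 1))) (f (Y (i + 2))) ≤ K * dist (Xp (i + 1)) (Y (i + 2)) :=
          (hf _ _).2
        have hd : dist (Xp (i + 1)) (Y (i + 2)) = dist (γ.xs (i + 1)) (γ.ys (i + 2)) := by
          rw [Subtype.dist_eq, hXp (i + 1) (by omega) (by omega), hY (i + 2) (by omega) (by omega)]
        rw [hd] at hle
        exact hle
    -- lower bound on the T-distance between the first and last gluing points
    have hTlow : (1 / K) * dist (γ.ys 1) (γ.xs (n + 1)) - C ≤ dist (f (Y 1)) (f (Xp (n + 1))) := by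
      have := (hf (Y 1) (Xp (n + 1))).1
      have hd : dist (Y 1) (Xp (n + 1)) = dist (γ.ys 1) (γ.xs (n + 1)) := by
        rw [Subtype.dist_eq, hY 1 le_rfl hk1, hXp (n + 1) (by omega) (by omega)]
      rw [hd] at this
      exact this
    -- abbreviations
    set SA : ℝ := ∑ i ∈ Finset.range (n + 1), dist (f (Y (i + 1))) (f (Xp (i + 1))) with hSAdef
    set sb : ℝ := ∑ i ∈ Finset.range n, dist (γ.xs (i + 1)) (γ.ys (i + 2)) with hsbdef
    have hSA0 : 0 ≤ SA := Finset.sum_nonneg fun i _ => dist_nonneg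
    have hsb0 : 0 ≤ sb := Finset.sum_nonneg fun i _ => dist_nonneg
    have hmul : (∑ i ∈ Finset.range n, K * dist (γ.xs (i + 1)) (γ.ys (i + 2))) = K * sb := by
      rw [hsbdef, Finset.mul_sum]
    rw [hmul] at hchain
    -- decompose length
    have hyendn : γ.ys (n + 2) = y := by
      have := γ.hyend
      rw [hn] at this
      exact this
    have hlen2 : γ.length = dist x (γ.ys 1) + SA + sb + dist (γ.xs (n + 1)) y := by
      rw [hlen, hn, Finset.sum_add_distrib, ← hSAdef,
        Finset.sum_range_succ (f := fun i => dist (γ.xs (i + 1)) (γ.ys (i + 2))), ← hsbdef,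
        hyendn]
      ring
    set D1 : ℝ := dist x (γ.ys 1)
    set D2 : ℝ := dist (γ.ys 1) (γ.xs (n + 1))
    set D3 : ℝ := dist (γ.xs (n + 1)) y
    have htri : dist x y ≤ D1 + D2 + D3 := dist_triangle4 _ _ _ _
    have hD10 : 0 ≤ D1 := dist_nonneg
    have hD30 : 0 ≤ D3 := dist_nonneg
    have hD20 : 0 ≤ D2 := dist_nonneg
    -- combine chain and pseudo-isometry lower bound, multiplied by K
    have h5 : D2 - K * C ≤ K * (SA + K * sb) := by
      have h6 : (1 / K) * D2 - C ≤ SA + K * sb := le_trans hTlow hchain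
      have h7 := mul_le_mul_of_nonneg_left h6 hK0.le
      calc D2 - K * C = K * ((1 / K) * D2 - C) := by field_simp
        _ ≤ K * (SA + K * sb) := h7
    rw [hlen2]
    have hKK : (0:ℝ) ≤ K ^ 2 - K := by nlinarith
    have hK21 : (0:ℝ) ≤ K ^ 2 - 1 := by nlinarith
    have key : dist x y - K * C ≤ K ^ 2 * (D1 + SA + sb + D3) := by
      nlinarith [h5, htri, mul_nonneg hKK hSA0, mul_nonneg hK21 hD10, mul_nonneg hK21 hD30]
    have hrw : (1 / K ^ 2) * dist x y - C / K = (dist x y - K * C) / K ^ 2 := by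
      field_simp
    rw [hrw, div_le_iff₀ (by positivity : (0:ℝ) < K ^ 2)]
    linarith

/-- Main theorem: if f : S → T is a pseudo-isometry with constants K, C then the natural map
F : X → X̂_f is a pseudo-isometry: d(F(x),F(y)) ≤ d_X(x,y) and
(1/K²)d_X(x,y) − 7C/K ≤ d(F(x),F(y)) for all x, y ∈ X, and F is coarsely surjective with
constant C. (Distances in X̂_f between images of points of X ⊔ T are given by surgD.) -/
theorem surgery_pseudoIsometry {X T : Type*} [MetricSpace X] [MetricSpace T] (S : Set X)
    (f : S → T) (K C : ℝ) (hK : 1 ≤ K) (hC : 0 ≤ C) (hf : IsPseudoIsometry f K C) :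
    (∀ x y : X, surgD S f (Sum.inl x) (Sum.inl y) ≤ dist x y ∧
      (1 / K ^ 2) * dist x y - 7 * C / K ≤ surgD S f (Sum.inl x) (Sum.inl y)) ∧
    (∀ a : X ⊕ T, ∃ x : X, surgD S f (Sum.inl x) a ≤ C) := by
  obtain ⟨hfb, hfs⟩ := hf
  have hK0 : (0:ℝ) < K := lt_of_lt_of_le one_pos hK
  have hbdd : ∀ x y : X, BddBelow {l : ℝ | ∃ γ : AdmSeq S f x y, l = γ.length} :=
    fun x y => ⟨0, fun l ⟨γ, hl⟩ => hl ▸ γ.length_nonneg⟩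
  have hub : ∀ x y : X, surgP S f x y ≤ dist x y := by
    intro x y
    apply csInf_le (hbdd x y)
    exact ⟨AdmSeq.trivial S f x y, (AdmSeq.trivial_length S f x y).symm⟩
  constructor
  · intro x y
    have hDeq : surgD S f (Sum.inl x) (Sum.inl y) = surgP S f x y := rfl
    refine ⟨by rw [hDeq]; exact hub x y, ?_⟩
    rw [hDeq]
    have hlb : (1 / K ^ 2) * dist x y - C / K ≤ surgP S f x y := by
      refine le_csInf ⟨dist x y, AdmSeq.trivial S f x y,
        (AdmSeq.trivial_length S f x y).symm⟩ ?_
      rintro l ⟨γ, rfl⟩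
      exact γ.length_lb hK hC hfb
    have h6 : (0:ℝ) ≤ 6 * C / K := by positivity
    have h7 : 7 * C / K = C / K + 6 * C / K := by ring
    linarith
  · intro a
    cases a with
    | inl y =>
      refine ⟨y, ?_⟩
      have hDeq : surgD S f (Sum.inl y) (Sum.inl y) = surgP S f y y := rfl
      rw [hDeq]
      have := hub y y
      simp only [dist_self] at this
      linarith
    | inr t =>
      obtain ⟨s, hs⟩ := hfs t
      refine ⟨(s : X), ?_⟩
      have hDeq : surgD S f (Sum.inl (s : X)) (Sum.inr t) = surgPXT S f (s : X) t := rfl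
      rw [hDeq]
      have hbdd2 : BddBelow {l : ℝ | ∃ (s' : S) (γ : AdmSeq S f (s : X) (s' : X)),
          l = γ.length + dist (f s') t} :=
        ⟨0, fun l ⟨s', γ, hl⟩ => hl ▸ add_nonneg γ.length_nonneg dist_nonneg⟩
      have h1 : surgPXT S f (s : X) t ≤
          (AdmSeq.trivial S f (s : X) (s : X)).length + dist (f s) t :=
        csInf_le hbdd2 ⟨s, AdmSeq.trivial S f (s : X) (s : X), rfl⟩
      rw [AdmSeq.trivial_length] at h1
      simp only [dist_self, zero_add] at h1
      linarith
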